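/- There exist a real d > 0 and a function δ : ℕ → ℝ with δ(n)/n → 0 as n → ∞ such that for every real α with 0 < α < 1/2 and every integer n ≥ 1, every pair of integers (m_A, m_B) satisfying m_A + m_B ≥ (1 + h(α))·n + δ(n), m_A ≥ h(α)·n + δ(n), and m_B ≥ h(α)·n + δ(n) is achievable for the randomized combinatorial Slepian–Wolf scheme with parameters (n, ⌊αn⌋, 2^{−n^d}), i.e., there exists a randomized protocol with these message lengths and error probability at most 2^{−n^d}. -/

import Mathlib

/-- The binary entropy function `h(α) = −α·log₂ α − (1−α)·log₂(1−α)`. -/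
noncomputable def binEnt (a : ℝ) : ℝ :=
  -a * Real.logb 2 a - (1 - a) * Real.logb 2 (1 - a)

/-- A triple of maps forms a randomized protocol for the combinatorial
Slepian–Wolf scheme with parameters `(n, T, ε)`: for each pair of inputs at
Hamming distance at most `T`, decoding succeeds with probability greater than
`1 − ε` over the three independent uniform random strings `r_A, r_B, r_C`. -/
def RandProtocol (n T R mA mB : ℕ)
    (CodeA : (Fin n → Bool) → (Fin R → Bool) → (Fin mA → Bool))
    (CodeB : (Fin n → Bool) → (Fin R → Bool) → (Fin mB → Bool))
    (Decode : (Fin mA → Bool) → (Fin mB → Bool) → (Fin R → Bool) →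
      (Fin n → Bool) × (Fin n → Bool)) (ε : ℝ) : Prop :=
  ∀ x y : Fin n → Bool, hammingDist x y ≤ T →
    ((Finset.univ.filter
        (fun r : (Fin R → Bool) × (Fin R → Bool) × (Fin R → Bool) =>
          Decode (CodeA x r.1) (CodeB y r.2.1) r.2.2 = (x, y))).card : ℝ)
      > (1 - ε) * 2 ^ (3 * R)

/-- `(mA, mB)` is an achievable pair of rates for the randomized combinatorial
Slepian–Wolf scheme with parameters `(n, T, ε)`. -/
def RandAchievable (n T mA mB : ℕ) (ε : ℝ) : Prop :=
  ∃ (R : ℕ)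
    (CodeA : (Fin n → Bool) → (Fin R → Bool) → (Fin mA → Bool))
    (CodeB : (Fin n → Bool) → (Fin R → Bool) → (Fin mB → Bool))
    (Decode : (Fin mA → Bool) → (Fin mB → Bool) → (Fin R → Bool) →
      (Fin n → Bool) × (Fin n → Bool)),
    RandProtocol n T R mA mB CodeA CodeB Decode ε


open Finset

namespace SWAux


abbrev Vec (n : ℕ) := Fin n → ZMod 2

def dot {n : ℕ} (r u : Vec n) : ZMod 2 := ∑ k, r k * u k

def mapp {n m : ℕ} (M : Fin m → Vec n) (u : Vec n) : Fin m → ZMod 2 :=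
  fun s => dot (M s) u

lemma z2 : ∀ z : ZMod 2, z + z = 0 := by decide

lemma z2ne : ∀ z : ZMod 2, z ≠ 0 → z = 1 := by decide

lemma addself {m : ℕ} (w : Fin m → ZMod 2) : w + w = 0 := by
  funext k; exact z2 (w k)

lemma mapp_add {n m : ℕ} (M : Fin m → Vec n) (u v : Vec n) :
    mapp M (u + v) = mapp M u + mapp M v := by
  funext s
  simp only [mapp, dot, Pi.add_apply, mul_add]
  exact Finset.sum_add_distrib

lemma mapp_cancel {n m : ℕ} (M : Fin m → Vec n) (u v : Vec n)
    (h : mapp M u = mapp M v) : mapp M (u + v) = 0 := by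
  rw [mapp_add, h]; exact addself _

/-- number of rows orthogonal to a fixed nonzero vector -/
lemma card_dot_eq_zero {n : ℕ} {u : Vec n} (hu : u ≠ 0) :
    #{r : Vec n | dot r u = 0} * 2 = 2 ^ n := by
  obtain ⟨k₀, hk₀⟩ : ∃ k, u k ≠ 0 := by
    by_contra h; push_neg at h; exact hu (funext fun k => h k)
  have hk1 : u k₀ = 1 := z2ne _ hk₀
  classical
  set δ : Vec n := fun k => if k = k₀ then 1 else 0 with hδ
  have hdotδ : ∀ r : Vec n, dot (r + δ) u = dot r u + 1 := by
    intro r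
    simp only [dot, Pi.add_apply, add_mul]
    rw [Finset.sum_add_distrib]
    congr 1
    have : ∀ k, δ k * u k = if k = k₀ then u k else 0 := by
      intro k; by_cases h : k = k₀ <;> simp [hδ, h]
    rw [Finset.sum_congr rfl fun k _ => this k]
    simp [hk1]
  have hinv : ∀ r : Vec n, r + δ + δ = r := by
    intro r; rw [add_assoc, addself, add_zero]
  have hcard : #{r : Vec n | dot r u = 0} = #{r : Vec n | ¬ dot r u = 0} := by
    apply Finset.card_bij' (fun r _ => r + δ) (fun r _ => r + δ)
    · intro r hr
      simp only [mem_filter, mem_univ, true_and] at hr ⊢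
      rw [hdotδ, hr]; decide
    · intro r hr
      simp only [mem_filter, mem_univ, true_and] at hr ⊢
      rw [hdotδ, z2ne _ hr]
      decide
    · intro r _; exact hinv r
    · intro r _; exact hinv r
  have htot := Finset.card_filter_add_card_filter_not
    (s := (univ : Finset (Vec n))) (p := fun r => dot r u = 0)
  have huniv : #(univ : Finset (Vec n)) = 2 ^ n := by
    simp [Finset.card_univ]
  omega

/-- counting functions with constrained values on a subset -/
lemma card_filter_pi {ι β : Type*} [Fintype ι] [DecidableEq ι] [Fintype β] [DecidableEq β]
    (S : Finset ι) (P : β → Prop) [DecidablePred P] :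
    #{F : ι → β | ∀ i ∈ S, P (F i)}
      = #{M : β | P M} ^ S.card * Fintype.card β ^ (Fintype.card ι - S.card) := by
  have hset : (Finset.filter (fun F : ι → β => ∀ i ∈ S, P (F i)) univ)
      = Fintype.piFinset (fun i => if i ∈ S then Finset.filter P univ else univ) := by
    ext F
    simp only [mem_filter, mem_univ, true_and, Fintype.mem_piFinset]
    constructor
    · intro h i
      by_cases hi : i ∈ S <;> simp [hi]
      exact h i hi
    · intro h i hi
      have := h i
      simp [hi] at this
      exact this
  rw [hset, Fintype.card_piFinset]
  rw [← Finset.prod_sdiff (Finset.subset_univ S)]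
  have h1 : ∀ i ∈ univ \ S, #(if i ∈ S then Finset.filter P univ else univ) = Fintype.card β := by
    intro i hi
    rw [Finset.mem_sdiff] at hi
    simp [hi.2, Finset.card_univ]
  have h2 : ∀ i ∈ S, #(if i ∈ S then Finset.filter P univ else univ) = #{M : β | P M} := by
    intro i hi; simp [hi]
  rw [Finset.prod_congr rfl h1, Finset.prod_congr rfl h2, Finset.prod_const, Finset.prod_const,
    Finset.card_sdiff_of_subset (Finset.subset_univ S), Finset.card_univ]
  ring

/-- union/threshold bound: counting families where some event has many bad indices -/
lemma card_filter_threshold {ι β E : Type*} [Fintype ι] [DecidableEq ι] [Fintype β]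
    [DecidableEq β] [Fintype E]
    (bad : E → β → Prop) [∀ e, DecidablePred (bad e)] (k b : ℕ)
    (hb : ∀ e : E, #{M : β | bad e M} ≤ b) :
    #{F : ι → β | ∃ e : E, k ≤ #{i : ι | bad e (F i)}}
      ≤ Fintype.card E * ((Fintype.card ι).choose k *
          (b ^ k * Fintype.card β ^ (Fintype.card ι - k))) := by
  classical
  have hsub : (Finset.filter (fun F : ι → β => ∃ e : E, k ≤ #{i : ι | bad e (F i)}) univ)
      ⊆ (univ : Finset E).biUnion (fun e =>
          (Finset.powersetCard k (univ : Finset ι)).biUnion (fun S =>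
            Finset.filter (fun F : ι → β => ∀ i ∈ S, bad e (F i)) univ)) := by
    intro F hF
    rw [mem_filter] at hF
    obtain ⟨-, e, hk⟩ := hF
    obtain ⟨S, hS, hScard⟩ := Finset.exists_subset_card_eq hk
    refine Finset.mem_biUnion.2 ⟨e, mem_univ _, Finset.mem_biUnion.2
      ⟨S, Finset.mem_powersetCard.2 ⟨Finset.subset_univ S, hScard⟩, ?_⟩⟩
    rw [mem_filter]
    exact ⟨mem_univ _, fun i hi => (mem_filter.1 (hS hi)).2⟩
  calc #{F : ι → β | ∃ e : E, k ≤ #{i : ι | bad e (F i)}}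
      ≤ _ := Finset.card_le_card hsub
    _ ≤ ∑ e : E, #((Finset.powersetCard k (univ : Finset ι)).biUnion (fun S =>
          {F : ι → β | ∀ i ∈ S, bad e (F i)})) := Finset.card_biUnion_le
    _ ≤ ∑ _e : E, ((Fintype.card ι).choose k *
          (b ^ k * Fintype.card β ^ (Fintype.card ι - k))) := by
        apply Finset.sum_le_sum
        intro e _
        calc #((Finset.powersetCard k (univ : Finset ι)).biUnion (fun S =>
              Finset.filter (fun F : ι → β => ∀ i ∈ S, bad e (F i)) univ))
            ≤ ∑ S ∈ Finset.powersetCard k (univ : Finset ι),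
                #(Finset.filter (fun F : ι → β => ∀ i ∈ S, bad e (F i)) univ) := Finset.card_biUnion_le
          _ ≤ ∑ _S ∈ Finset.powersetCard k (univ : Finset ι),
                (b ^ k * Fintype.card β ^ (Fintype.card ι - k)) := by
              apply Finset.sum_le_sum
              intro S hS
              rw [Finset.mem_powersetCard] at hS
              rw [card_filter_pi S (bad e), hS.2]
              exact Nat.mul_le_mul_right _ (Nat.pow_le_pow_left (hb e) k)
          _ = (Fintype.card ι).choose k *
                (b ^ k * Fintype.card β ^ (Fintype.card ι - k)) := by
              rw [Finset.sum_const, Finset.card_powersetCard, Finset.card_univ, smul_eq_mul]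
    _ = _ := by rw [Finset.sum_const, Finset.card_univ, smul_eq_mul]

/-- Markov-type counting bound -/
lemma markov_count {β : Type*} [Fintype β] (f : β → ℕ) (k : ℕ) :
    #{M : β | k ≤ f M} * k ≤ ∑ M : β, f M := by
  classical
  calc #{M : β | k ≤ f M} * k = ∑ M ∈ {M : β | k ≤ f M}, k := by
        rw [Finset.sum_const, smul_eq_mul]
    _ ≤ ∑ M ∈ {M : β | k ≤ f M}, f M :=
        Finset.sum_le_sum (fun M hM => (mem_filter.1 hM).2)
    _ ≤ ∑ M : β, f M := Finset.sum_le_sum_of_subset (Finset.filter_subset _ _)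

/-- expectation over families of a sum over coordinates -/
lemma sum_family {ι β : Type*} [Fintype ι] [DecidableEq ι] [Fintype β] [DecidableEq β]
    (g : β → ℕ) :
    ∑ F : ι → β, ∑ i : ι, g (F i)
      = Fintype.card ι * ((∑ M : β, g M) * Fintype.card β ^ (Fintype.card ι - 1)) := by
  classical
  rw [Finset.sum_comm]
  have hinner : ∀ i : ι, ∑ F : ι → β, g (F i)
      = (∑ M : β, g M) * Fintype.card β ^ (Fintype.card ι - 1) := by
    intro i
    rw [← Fintype.sum_equiv (Equiv.piSplitAt i (fun _ => β)).symm
      (fun p => g ((Equiv.piSplitAt i (fun _ => β)).symm p i)) (fun F => g (F i))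
      (fun p => rfl)]
    have happ : ∀ p : β × ({ j // j ≠ i } → β),
        (Equiv.piSplitAt i (fun _ => β)).symm p i = p.1 := by
      intro p
      simp [Equiv.piSplitAt]
    rw [Fintype.sum_congr _ _ (fun p => by rw [happ p])]
    rw [Fintype.sum_prod_type]
    have : ∀ x : β, ∑ _y : { j // j ≠ i } → β, g x
        = g x * Fintype.card β ^ (Fintype.card ι - 1) := by
      intro x
      rw [Finset.sum_const, Finset.card_univ, smul_eq_mul, mul_comm]
      congr 2
      rw [Fintype.card_fun]
      congr 1
      rw [Fintype.card_subtype_compl, Fintype.card_subtype_eq]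
    rw [Fintype.sum_congr _ _ this, ← Finset.sum_mul]
  rw [Fintype.sum_congr _ _ hinner, Finset.sum_const, Finset.card_univ, smul_eq_mul]

lemma vec_cancel {n : ℕ} (e u v : Vec n) : e + u + v + e + v = u := by
  have h : ∀ a b c : ZMod 2, a + b + c + a + c = b := by decide
  funext k
  exact h (e k) (u k) (v k)

lemma card_row_eq {n : ℕ} {u : Vec n} (hu : u ≠ 0) :
    #{r : Vec n | dot r u = 0} = 2 ^ (n - 1) := by
  have h2 := card_dot_eq_zero hu
  have hn : 1 ≤ n := by
    rcases Nat.eq_zero_or_pos n with h | h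
    · exfalso; apply hu; funext k; exact absurd k.2 (by omega)
    · exact h
  have : 2 ^ n = 2 ^ (n - 1) * 2 := by
    rw [← pow_succ]; congr 1; omega
  omega

lemma card_mapp_eq {n m : ℕ} {u : Vec n} (hu : u ≠ 0) :
    #{M : Fin m → Vec n | mapp M u = 0} = 2 ^ ((n - 1) * m) := by
  classical
  have hset : (Finset.filter (fun M : Fin m → Vec n => mapp M u = 0) univ)
      = Fintype.piFinset (fun _ : Fin m => Finset.filter (fun r : Vec n => dot r u = 0) univ) := by
    ext M
    simp only [mem_filter, mem_univ, true_and, Fintype.mem_piFinset]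
    constructor
    · intro h s
      exact congrFun h s
    · intro h
      funext s
      exact h s
  rw [hset, Fintype.card_piFinset]
  simp only [card_row_eq hu, Finset.prod_const, Finset.card_univ, Fintype.card_fin]
  rw [← pow_mul]

lemma card_mapp_le {n m : ℕ} (u : Vec n) :
    #{M : Fin m → Vec n | u ≠ 0 ∧ mapp M u = 0} ≤ 2 ^ ((n - 1) * m) := by
  classical
  by_cases hu : u = 0
  · have : (Finset.filter (fun M : Fin m → Vec n => u ≠ 0 ∧ mapp M u = 0) univ) = ∅ := by
      apply Finset.filter_false_of_mem
      intro M _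
      simp [hu]
    rw [this]; simp
  · have heq : Finset.filter (fun M : Fin m → Vec n => u ≠ 0 ∧ mapp M u = 0) univ
        = Finset.filter (fun M : Fin m → Vec n => mapp M u = 0) univ :=
      Finset.filter_congr (fun M _ => by simp [hu])
    rw [heq]
    exact le_of_eq (card_mapp_eq hu)

def kerCount {n m : ℕ} (M : Fin m → Vec n) : ℕ := #{u : Vec n | u ≠ 0 ∧ mapp M u = 0}

lemma sum_kerCount {n m : ℕ} :
    ∑ M : Fin m → Vec n, kerCount M ≤ 2 ^ n * 2 ^ ((n - 1) * m) := by
  classical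
  unfold kerCount
  simp only [Finset.card_filter]
  rw [Finset.sum_comm]
  calc ∑ u : Vec n, ∑ M : Fin m → Vec n, (if u ≠ 0 ∧ mapp M u = 0 then 1 else 0)
      = ∑ u : Vec n, #{M : Fin m → Vec n | u ≠ 0 ∧ mapp M u = 0} := by
        apply Finset.sum_congr rfl; intro u _; rw [Finset.card_filter]
    _ ≤ ∑ _u : Vec n, 2 ^ ((n - 1) * m) := Finset.sum_le_sum (fun u _ => card_mapp_le u)
    _ = 2 ^ n * 2 ^ ((n - 1) * m) := by
        rw [Finset.sum_const, Finset.card_univ, smul_eq_mul]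
        congr 1
        simp [Fintype.card_fun]

def ballCard (n T : ℕ) : ℕ := #{w : Vec n | hammingNorm w ≤ T}

lemma card_shiftball_le {n T : ℕ} (e : Vec n) :
    #{v : Vec n | v ≠ 0 ∧ hammingNorm (e + v) ≤ T} ≤ ballCard n T := by
  classical
  apply Finset.card_le_card_of_injOn (fun v => e + v)
  · intro v hv
    simp only [Finset.mem_coe, mem_filter, mem_univ, true_and] at hv ⊢
    exact hv.2
  · intro v₁ _ v₂ _ h
    exact add_left_cancel h

/-- the one-sided bad event -/
def badKer {n m : ℕ} (T : ℕ) (e : Vec n) (M : Fin m → Vec n) : Prop :=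
  ∃ v : Vec n, v ≠ 0 ∧ mapp M v = 0 ∧ hammingNorm (e + v) ≤ T

instance badKerDec {n m T : ℕ} {e : Vec n} : DecidablePred (fun M : Fin m → Vec n => badKer T e M) :=
  fun M => decidable_of_iff
    (∃ v : Vec n, v ≠ 0 ∧ mapp M v = 0 ∧ hammingNorm (e + v) ≤ T) Iff.rfl

lemma card_badKer_le {n m T : ℕ} (e : Vec n) :
    #{M : Fin m → Vec n | badKer T e M} ≤ ballCard n T * 2 ^ ((n - 1) * m) := by
  classical
  have hsub : (Finset.filter (fun M : Fin m → Vec n => badKer T e M) univ)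
      ⊆ (Finset.filter (fun v : Vec n => v ≠ 0 ∧ hammingNorm (e + v) ≤ T) univ).biUnion
          (fun v => Finset.filter (fun M : Fin m → Vec n => v ≠ 0 ∧ mapp M v = 0) univ) := by
    intro M hM
    simp only [mem_filter, mem_univ, true_and] at hM
    obtain ⟨v, hv0, hvm, hvb⟩ := hM
    apply Finset.mem_biUnion.2
    exact ⟨v, by simp [hv0, hvb], by simp [hv0, hvm]⟩
  calc #(Finset.filter (fun M : Fin m → Vec n => badKer T e M) univ)
      ≤ _ := Finset.card_le_card hsub
    _ ≤ ∑ v ∈ Finset.filter (fun v : Vec n => v ≠ 0 ∧ hammingNorm (e + v) ≤ T) univ,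
          #(Finset.filter (fun M : Fin m → Vec n => v ≠ 0 ∧ mapp M v = 0) univ) :=
        Finset.card_biUnion_le
    _ ≤ ∑ _v ∈ Finset.filter (fun v : Vec n => v ≠ 0 ∧ hammingNorm (e + v) ≤ T) univ,
          2 ^ ((n - 1) * m) := Finset.sum_le_sum (fun v _ => card_mapp_le v)
    _ = #(Finset.filter (fun v : Vec n => v ≠ 0 ∧ hammingNorm (e + v) ≤ T) univ)
          * 2 ^ ((n - 1) * m) := by rw [Finset.sum_const, smul_eq_mul]
    _ ≤ ballCard n T * 2 ^ ((n - 1) * m) :=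
        Nat.mul_le_mul_right _ (card_shiftball_le e)

/-- the joint bad event for a pair of matrices -/
def cellBad {n mA mB : ℕ} (T : ℕ) (e : Vec n) (M : Fin mA → Vec n) (M' : Fin mB → Vec n) : Prop :=
  ∃ u v : Vec n, u ≠ 0 ∧ v ≠ 0 ∧ mapp M u = 0 ∧ mapp M' v = 0 ∧
    hammingNorm (e + u + v) ≤ T

instance cellBadDec {n mA mB T : ℕ} {e : Vec n} {M : Fin mA → Vec n} {M' : Fin mB → Vec n} :
    Decidable (cellBad T e M M') :=
  decidable_of_iff (∃ u v : Vec n, u ≠ 0 ∧ v ≠ 0 ∧ mapp M u = 0 ∧ mapp M' v = 0 ∧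
    hammingNorm (e + u + v) ≤ T) Iff.rfl

lemma card_cellRow_le {n mA mB : ℕ} {J : Type*} [Fintype J] (T : ℕ) (e : Vec n)
    (G : J → Fin mB → Vec n) :
    #{M : Fin mA → Vec n | ∃ j : J, cellBad T e M (G j)}
      ≤ (∑ j : J, kerCount (G j)) * (ballCard n T * 2 ^ ((n - 1) * mA)) := by
  classical
  have hsub : (Finset.filter (fun M : Fin mA → Vec n => ∃ j : J, cellBad T e M (G j)) univ)
      ⊆ (univ : Finset J).biUnion (fun j =>
          ((Finset.filter (fun v : Vec n => v ≠ 0 ∧ mapp (G j) v = 0) univ) ×ˢ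
            (Finset.filter (fun w : Vec n => hammingNorm w ≤ T) univ)).biUnion
          (fun p => Finset.filter
            (fun M : Fin mA → Vec n => (p.2 + e + p.1) ≠ 0 ∧ mapp M (p.2 + e + p.1) = 0) univ)) := by
    intro M hM
    simp only [mem_filter, mem_univ, true_and] at hM
    obtain ⟨j, u, v, hu0, hv0, hum, hvm, hb⟩ := hM
    apply Finset.mem_biUnion.2
    refine ⟨j, mem_univ _, Finset.mem_biUnion.2 ⟨(v, e + u + v), ?_, ?_⟩⟩
    · rw [Finset.mem_product]
      constructor <;> simp [hv0, hvm, hb]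
    · have hue : (e + u + v) + e + v = u := vec_cancel e u v
      simp only [mem_filter, mem_univ, true_and]
      rw [hue]
      exact ⟨hu0, hum⟩
  calc #(Finset.filter (fun M : Fin mA → Vec n => ∃ j : J, cellBad T e M (G j)) univ)
      ≤ _ := Finset.card_le_card hsub
    _ ≤ ∑ j : J, #(((Finset.filter (fun v : Vec n => v ≠ 0 ∧ mapp (G j) v = 0) univ) ×ˢ
            (Finset.filter (fun w : Vec n => hammingNorm w ≤ T) univ)).biUnion
          (fun p => Finset.filter
            (fun M : Fin mA → Vec n => (p.2 + e + p.1) ≠ 0 ∧ mapp M (p.2 + e + p.1) = 0) univ)) :=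
        Finset.card_biUnion_le
    _ ≤ ∑ j : J, (kerCount (G j) * (ballCard n T * 2 ^ ((n - 1) * mA))) := by
        apply Finset.sum_le_sum
        intro j _
        calc _ ≤ ∑ p ∈ ((Finset.filter (fun v : Vec n => v ≠ 0 ∧ mapp (G j) v = 0) univ) ×ˢ
                (Finset.filter (fun w : Vec n => hammingNorm w ≤ T) univ)),
              #(Finset.filter
                (fun M : Fin mA → Vec n => (p.2 + e + p.1) ≠ 0 ∧ mapp M (p.2 + e + p.1) = 0) univ) :=
            Finset.card_biUnion_le
          _ ≤ ∑ _p ∈ ((Finset.filter (fun v : Vec n => v ≠ 0 ∧ mapp (G j) v = 0) univ) ×ˢ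
                (Finset.filter (fun w : Vec n => hammingNorm w ≤ T) univ)),
              2 ^ ((n - 1) * mA) := Finset.sum_le_sum (fun p _ => card_mapp_le _)
          _ = (kerCount (G j) * #(Finset.filter (fun w : Vec n => hammingNorm w ≤ T) univ))
                * 2 ^ ((n - 1) * mA) := by
              rw [Finset.sum_const, smul_eq_mul, Finset.card_product]
              rfl
          _ = kerCount (G j) * (ballCard n T * 2 ^ ((n - 1) * mA)) := by
              rw [ballCard]; ring
    _ = (∑ j : J, kerCount (G j)) * (ballCard n T * 2 ^ ((n - 1) * mA)) := by
        rw [Finset.sum_mul]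

lemma ballCard_le_sum_choose (n T : ℕ) :
    ballCard n T ≤ ∑ i ∈ range (T + 1), n.choose i := by
  classical
  unfold ballCard
  have hB : ∑ i ∈ range (T + 1), n.choose i
      = ∑ i ∈ range (T + 1), #(Finset.powersetCard i (univ : Finset (Fin n))) := by
    apply Finset.sum_congr rfl
    intro i _
    rw [Finset.card_powersetCard, Finset.card_univ, Fintype.card_fin]
  rw [hB]
  calc #{w : Vec n | hammingNorm w ≤ T}
      ≤ #((range (T + 1)).biUnion (fun i => Finset.powersetCard i (univ : Finset (Fin n)))) := by
        apply Finset.card_le_card_of_injOn (fun w => Finset.filter (fun k => w k ≠ 0) univ)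
        · intro w hw
          simp only [ballCard, Finset.mem_coe, mem_filter, mem_univ, true_and] at hw
          apply Finset.mem_biUnion.2
          refine ⟨#(Finset.filter (fun k => w k ≠ 0) univ), ?_, ?_⟩
          · rw [Finset.mem_range]
            have : #(Finset.filter (fun k => w k ≠ 0) univ) = hammingNorm w := rfl
            omega
          · exact Finset.mem_powersetCard.2 ⟨Finset.subset_univ _, rfl⟩
        · intro w1 h1 w2 h2 heq
          simp only at heq
          funext k
          by_cases hk : k ∈ Finset.filter (fun k => w1 k ≠ 0) univ
          · have hk2 : k ∈ Finset.filter (fun k => w2 k ≠ 0) univ := heq ▸ hk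
            simp only [mem_filter, mem_univ, true_and] at hk hk2
            rw [z2ne _ hk, z2ne _ hk2]
          · have hk2 : k ∉ Finset.filter (fun k => w2 k ≠ 0) univ := heq ▸ hk
            simp only [mem_filter, mem_univ, true_and, not_not] at hk hk2
            rw [hk, hk2]
    _ ≤ _ := Finset.card_biUnion_le

lemma sum_choose_le_rpow {n T : ℕ} {α : ℝ} (hα0 : 0 < α) (hα2 : α < 1 / 2)
    (hT : (T : ℝ) ≤ α * n) (hTn : T ≤ n) :
    ((∑ i ∈ range (T + 1), n.choose i : ℕ) : ℝ) ≤ 2 ^ (binEnt α * n) := by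
  set a : ℝ := α with ha
  set b : ℝ := 1 - α with hb
  have hb0 : 0 < b := by rw [hb]; linarith
  have hab : a + b = 1 := by rw [ha, hb]; ring
  have hab1 : a / b ≤ 1 := by
    rw [div_le_one hb0]; rw [ha, hb]; linarith
  have hdiv0 : 0 < a / b := div_pos hα0 hb0
  -- the key pointwise bound
  have key : ∀ i ∈ range (T + 1), (2 : ℝ) ^ (-(binEnt α * n)) ≤ a ^ i * b ^ (n - i) := by
    intro i hi
    rw [Finset.mem_range] at hi
    have hin : i ≤ n := le_trans (by omega) hTn
    have hbni : (b:ℝ) ^ n = b ^ i * b ^ (n - i) := by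
      rw [← pow_add]; congr 1; omega
    have h1 : a ^ i * b ^ (n - i) = (a / b) ^ i * b ^ n := by
      rw [div_pow, hbni]
      field_simp
    rw [h1]
    have h2 : ((a / b) ^ (α * (n:ℝ)) : ℝ) ≤ (a / b) ^ (i : ℝ) := by
      apply Real.rpow_le_rpow_of_exponent_ge hdiv0 hab1
      calc (i : ℝ) ≤ T := by exact_mod_cast Nat.lt_succ_iff.1 hi
        _ ≤ α * n := hT
    have h3 : ((a / b) ^ ((i:ℕ) : ℝ) : ℝ) = (a / b) ^ (i : ℕ) := Real.rpow_natCast _ i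
    have h4 : (2 : ℝ) ^ (-(binEnt α * n)) = (a / b) ^ (α * (n:ℝ)) * b ^ n := by
      have hra : (2 : ℝ) ^ (Real.logb 2 a * (a * n)) = a ^ (a * (n:ℝ)) := by
        rw [Real.rpow_mul (by norm_num : (0:ℝ) ≤ 2),
          Real.rpow_logb (by norm_num) (by norm_num) hα0]
      have hrb : (2 : ℝ) ^ (Real.logb 2 b * (b * n)) = b ^ (b * (n:ℝ)) := by
        rw [Real.rpow_mul (by norm_num : (0:ℝ) ≤ 2),
          Real.rpow_logb (by norm_num) (by norm_num) hb0]
      have hexp : -(binEnt α * n) = Real.logb 2 a * (a * n) + Real.logb 2 b * (b * n) := by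
        rw [binEnt, ha, hb]; ring
      rw [hexp, Real.rpow_add (by norm_num : (0:ℝ) < 2), hra, hrb]
      have hsplit : ((a / b) ^ (α * (n:ℝ)) : ℝ) = a ^ (α * (n:ℝ)) / b ^ (α * (n:ℝ)) :=
        Real.div_rpow (le_of_lt hα0) (le_of_lt hb0) _
      rw [hsplit]
      have hbn : (b : ℝ) ^ n = b ^ ((n : ℕ) : ℝ) := (Real.rpow_natCast _ n).symm
      rw [hbn]
      rw [div_mul_eq_mul_div, eq_div_iff (ne_of_gt (Real.rpow_pos_of_pos hb0 _))]
      rw [mul_assoc, ← Real.rpow_add hb0]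
      have e1 : b * (n:ℝ) + α * (n:ℝ) = ((n:ℕ):ℝ) := by rw [hb]; ring
      rw [e1, ha]
    rw [h4]
    apply mul_le_mul_of_nonneg_right _ (by positivity)
    rw [← h3]
    exact h2
  -- sum bound via binomial theorem
  have hbinom : ∑ i ∈ range (n + 1), (n.choose i : ℝ) * (a ^ i * b ^ (n - i)) = 1 := by
    have h := add_pow a b n
    rw [hab, one_pow] at h
    calc ∑ i ∈ range (n + 1), (n.choose i : ℝ) * (a ^ i * b ^ (n - i))
        = ∑ i ∈ range (n + 1), a ^ i * b ^ (n - i) * (n.choose i : ℝ) := by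
          apply Finset.sum_congr rfl; intro i _; ring
      _ = 1 := h.symm
  have hsum1 : ∑ i ∈ range (T + 1), (n.choose i : ℝ) * (a ^ i * b ^ (n - i)) ≤ 1 := by
    rw [← hbinom]
    apply Finset.sum_le_sum_of_subset_of_nonneg
    · apply Finset.range_subset_range.2; omega
    · intro i _ _
      positivity
  have hsum2 : (∑ i ∈ range (T + 1), (n.choose i : ℝ)) * (2 : ℝ) ^ (-(binEnt α * n)) ≤ 1 := by
    calc (∑ i ∈ range (T + 1), (n.choose i : ℝ)) * (2 : ℝ) ^ (-(binEnt α * n))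
        = ∑ i ∈ range (T + 1), (n.choose i : ℝ) * (2 : ℝ) ^ (-(binEnt α * n)) := by
          rw [Finset.sum_mul]
      _ ≤ ∑ i ∈ range (T + 1), (n.choose i : ℝ) * (a ^ i * b ^ (n - i)) := by
          apply Finset.sum_le_sum
          intro i hi
          exact mul_le_mul_of_nonneg_left (key i hi) (by positivity)
      _ ≤ 1 := hsum1
  have hpos : (0:ℝ) < (2 : ℝ) ^ (binEnt α * n) := Real.rpow_pos_of_pos (by norm_num) _
  have hinv : (2 : ℝ) ^ (-(binEnt α * n)) = ((2 : ℝ) ^ (binEnt α * n))⁻¹ :=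
    Real.rpow_neg (by norm_num) _
  rw [hinv] at hsum2
  push_cast
  calc (∑ i ∈ range (T + 1), (n.choose i : ℝ))
      = (∑ i ∈ range (T + 1), (n.choose i : ℝ)) * ((2 : ℝ) ^ (binEnt α * n))⁻¹
        * (2 : ℝ) ^ (binEnt α * n) := by
        field_simp
    _ ≤ 1 * (2 : ℝ) ^ (binEnt α * n) := by
        apply mul_le_mul_of_nonneg_right hsum2 (le_of_lt hpos)
    _ = _ := one_mul _

lemma ballCard_le_rpow {n T : ℕ} {α : ℝ} (hα0 : 0 < α) (hα2 : α < 1 / 2)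
    (hT : (T : ℝ) ≤ α * n) (hTn : T ≤ n) :
    ((ballCard n T : ℕ) : ℝ) ≤ 2 ^ (binEnt α * n) := by
  calc ((ballCard n T : ℕ) : ℝ) ≤ ((∑ i ∈ range (T + 1), n.choose i : ℕ) : ℝ) := by
        exact_mod_cast ballCard_le_sum_choose n T
    _ ≤ _ := sum_choose_le_rpow hα0 hα2 hT hTn

def idMat {n m : ℕ} : Fin m → Vec n := fun s k => if (s : ℕ) = (k : ℕ) then 1 else 0

lemma idMat_ker {n m : ℕ} (hnm : n ≤ m) (u : Vec n) (h : mapp (idMat (m := m)) u = 0) :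
    u = 0 := by
  funext k
  have hs : (k : ℕ) < m := lt_of_lt_of_le k.2 hnm
  have := congrFun h ⟨(k : ℕ), hs⟩
  simp only [mapp, dot, idMat] at this
  rw [show (∑ k' : Fin n, (if ((⟨(k : ℕ), hs⟩ : Fin m) : ℕ) = (k' : ℕ) then (1 : ZMod 2) else 0) * u k')
      = ∑ k' : Fin n, (if k' = k then u k' else 0) from Finset.sum_congr rfl fun k' _ => by
        by_cases hkk : k' = k
        · subst hkk; simp
        · have : ¬ ((k : ℕ) = (k' : ℕ)) := fun hc => hkk (Fin.ext hc.symm)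
          simp [this, hkk]] at this
  rwa [Finset.sum_ite_eq' univ k (fun k' => u k'), if_pos (mem_univ k)] at this

/-- Existence of a good B-side family of hash matrices -/
lemma exists_famB (n σ T m2 : ℕ) (hn : 1 ≤ n) (hm2n : m2 ≤ n) (hNσ : n + 2 ≤ 2 ^ σ)
    (hcase : n ≤ m2 ∨ ((2:ℝ) ^ (σ + 1) * ballCard n T ≤ 2 ^ m2)) :
    ∃ G : (Fin σ → Bool) → Fin m2 → Vec n,
      (∀ e : Vec n, #{j : Fin σ → Bool | badKer T e (G j)} ≤ n + 1) ∧
      (∑ j : Fin σ → Bool, kerCount (G j) ≤ 2 ^ (σ + 3) * 2 ^ (n - m2)) := by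
  classical
  rcases hcase with hcap | hrand
  · -- capped case : identity matrix, trivial kernel
    refine ⟨fun _ => idMat, fun e => ?_, ?_⟩
    · have h0 : ∀ j : Fin σ → Bool, j ∈ (univ : Finset (Fin σ → Bool)) →
          ¬ badKer T e ((fun _ : Fin σ → Bool => (idMat : Fin m2 → Vec n)) j) := by
        intro j _
        rintro ⟨v, hv0, hvm, -⟩
        exact hv0 (idMat_ker hcap v hvm)
      rw [Finset.filter_false_of_mem h0]
      simp
    · have hker : ∀ j : Fin σ → Bool,
          kerCount ((fun _ : Fin σ → Bool => (idMat : Fin m2 → Vec n)) j) = 0 := by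
        intro j
        rw [kerCount, Finset.card_eq_zero]
        apply Finset.filter_false_of_mem
        intro u _
        rintro ⟨hu0, hum⟩
        exact hu0 (idMat_ker hcap u hum)
      rw [Finset.sum_congr rfl (fun j _ => hker j)]
      simp
  · -- random case
    have hcardι : Fintype.card (Fin σ → Bool) = 2 ^ σ := by
      simp [Fintype.card_fun]
    have hcardβ : Fintype.card (Fin m2 → Vec n) = 2 ^ (n * m2) := by
      simp [Fintype.card_fun, Fintype.card_pi]
      rw [← pow_mul]
    set k := n + 2 with hk
    set bB := ballCard n T * 2 ^ ((n - 1) * m2) with hbB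
    set KB := 2 ^ (σ + 3) * 2 ^ (n - m2) with hKB
    set Bad1 := (Finset.filter (fun G : (Fin σ → Bool) → Fin m2 → Vec n =>
      ∃ e : Vec n, k ≤ #{j : Fin σ → Bool | badKer T e (G j)}) univ) with hBad1
    set Bad2 := (Finset.filter (fun G : (Fin σ → Bool) → Fin m2 → Vec n =>
      KB + 1 ≤ ∑ j : Fin σ → Bool, kerCount (G j)) univ) with hBad2
    -- counting bounds
    have h1 : #Bad1 ≤ 2 ^ n * ((2 ^ σ).choose k * (bB ^ k * (2 ^ (n * m2)) ^ (2 ^ σ - k))) := by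
      have := card_filter_threshold (ι := (Fin σ → Bool)) (β := (Fin m2 → Vec n)) (E := Vec n)
        (fun e M => badKer T e M) k bB (fun e => card_badKer_le e)
      rw [hcardι, hcardβ] at this
      have hVc : Fintype.card (Vec n) = 2 ^ n := by simp [Fintype.card_fun]
      rw [hVc] at this
      exact this
    have h2 : #Bad2 * (KB + 1) ≤ 2 ^ σ * ((2 ^ n * 2 ^ ((n - 1) * m2)) * (2 ^ (n * m2)) ^ (2 ^ σ - 1)) := by
      calc #Bad2 * (KB + 1) ≤ ∑ G : (Fin σ → Bool) → Fin m2 → Vec n, ∑ j : Fin σ → Bool, kerCount (G j) :=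
            markov_count (fun G : (Fin σ → Bool) → Fin m2 → Vec n => ∑ j : Fin σ → Bool, kerCount (G j)) (KB + 1)
        _ = Fintype.card (Fin σ → Bool) * ((∑ M : Fin m2 → Vec n, kerCount M)
              * Fintype.card (Fin m2 → Vec n) ^ (Fintype.card (Fin σ → Bool) - 1)) :=
            sum_family _
        _ ≤ 2 ^ σ * ((2 ^ n * 2 ^ ((n - 1) * m2)) * (2 ^ (n * m2)) ^ (2 ^ σ - 1)) := by
            rw [hcardι, hcardβ]
            exact Nat.mul_le_mul_left _ (Nat.mul_le_mul_right _ sum_kerCount)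
    -- real comparison
    have hm2split : m2 + (n - 1) * m2 = n * m2 := by
      cases n with
      | zero => omega
      | succ n' => simp [Nat.succ_sub_one]; ring
    have hNbB : ((2:ℝ) ^ σ) * bB ≤ (2:ℝ) ^ (n * m2) / 2 := by
      rw [hbB]
      push_cast
      calc (2:ℝ) ^ σ * ((ballCard n T : ℝ) * 2 ^ ((n - 1) * m2))
          = ((2:ℝ) ^ (σ + 1) * (ballCard n T : ℝ)) * 2 ^ ((n - 1) * m2) / 2 := by ring
        _ ≤ ((2:ℝ) ^ m2) * 2 ^ ((n - 1) * m2) / 2 := by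
            apply div_le_div_of_nonneg_right _ (by norm_num)
            apply mul_le_mul_of_nonneg_right hrand (by positivity)
        _ = (2:ℝ) ^ (n * m2) / 2 := by
            rw [← pow_add, hm2split]
    have hb1R : (#Bad1 : ℝ) ≤ (2:ℝ) ^ (n * m2 * 2 ^ σ) / 4 := by
      have hkN : k ≤ 2 ^ σ := by omega
      calc (#Bad1 : ℝ)
          ≤ 2 ^ n * ((2 ^ σ : ℕ).choose k * ((bB:ℝ) ^ k * ((2:ℝ) ^ (n * m2)) ^ (2 ^ σ - k))) := by
            exact_mod_cast h1
        _ ≤ 2 ^ n * (((2:ℝ) ^ σ) ^ k * ((bB:ℝ) ^ k * ((2:ℝ) ^ (n * m2)) ^ (2 ^ σ - k))) := by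
            apply mul_le_mul_of_nonneg_left _ (by positivity)
            apply mul_le_mul_of_nonneg_right _ (by positivity)
            exact_mod_cast Nat.choose_le_pow (2 ^ σ) k
        _ = 2 ^ n * ((((2:ℝ) ^ σ) * bB) ^ k * ((2:ℝ) ^ (n * m2)) ^ (2 ^ σ - k)) := by
            rw [mul_pow]; ring
        _ ≤ 2 ^ n * (((2:ℝ) ^ (n * m2) / 2) ^ k * ((2:ℝ) ^ (n * m2)) ^ (2 ^ σ - k)) := by
            apply mul_le_mul_of_nonneg_left _ (by positivity)
            apply mul_le_mul_of_nonneg_right _ (by positivity)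
            apply pow_le_pow_left₀ (by positivity) hNbB
        _ = (2:ℝ) ^ n / 2 ^ k * (((2:ℝ) ^ (n * m2)) ^ k * ((2:ℝ) ^ (n * m2)) ^ (2 ^ σ - k)) := by
            rw [div_pow]; ring
        _ = (2:ℝ) ^ n / 2 ^ k * ((2:ℝ) ^ (n * m2)) ^ (2 ^ σ) := by
            rw [← pow_add]
            congr 2
            omega
        _ = (2:ℝ) ^ n / 2 ^ k * (2:ℝ) ^ (n * m2 * 2 ^ σ) := by
            rw [← pow_mul]
        _ ≤ (1/4) * (2:ℝ) ^ (n * m2 * 2 ^ σ) := by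
            apply mul_le_mul_of_nonneg_right _ (by positivity)
            rw [hk, div_le_iff₀ (by positivity)]
            rw [show n + 2 = n + 2 from rfl]
            calc (2:ℝ) ^ n = (1/4) * 2 ^ (n + 2) := by rw [pow_add]; ring
              _ ≤ _ := le_refl _
        _ = (2:ℝ) ^ (n * m2 * 2 ^ σ) / 4 := by ring
    have hb2R : (#Bad2 : ℝ) ≤ (2:ℝ) ^ (n * m2 * 2 ^ σ) / 8 := by
      have hKBpos : (0:ℝ) < KB + 1 := by positivity
      have h2R : (#Bad2 : ℝ) * (KB + 1)
          ≤ 2 ^ σ * ((2 ^ n * 2 ^ ((n - 1) * m2)) * ((2:ℝ) ^ (n * m2)) ^ (2 ^ σ - 1)) := by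
        exact_mod_cast h2
      have hKBR : ((KB : ℝ) + 1) ≥ (2:ℝ) ^ (σ + 3) * 2 ^ (n - m2) := by
        rw [hKB]; push_cast; linarith
      -- divide
      rw [← mul_le_mul_iff_left₀ hKBpos]
      calc (#Bad2 : ℝ) * (KB + 1)
          ≤ 2 ^ σ * ((2 ^ n * 2 ^ ((n - 1) * m2)) * ((2:ℝ) ^ (n * m2)) ^ (2 ^ σ - 1)) := h2R
        _ = 2 ^ (σ + n + (n - 1) * m2) * ((2:ℝ) ^ (n * m2)) ^ (2 ^ σ - 1) := by
            ring
        _ ≤ (2:ℝ) ^ (n * m2 * 2 ^ σ) / 8 * ((2:ℝ) ^ (σ + 3) * 2 ^ (n - m2)) := by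
            have hone : 1 ≤ 2 ^ σ := Nat.one_le_two_pow (n := σ)
            have h21 : 2 ^ σ - 1 + 1 = 2 ^ σ := by omega
            have hsplit : (2:ℝ) ^ (n * m2 * 2 ^ σ)
                = (2:ℝ) ^ (n * m2) * ((2:ℝ) ^ (n * m2)) ^ (2 ^ σ - 1) := by
              calc (2:ℝ) ^ (n * m2 * 2 ^ σ) = ((2:ℝ) ^ (n * m2)) ^ (2 ^ σ) := by rw [← pow_mul]
                _ = ((2:ℝ) ^ (n * m2)) ^ (2 ^ σ - 1 + 1) := by rw [h21]
                _ = (2:ℝ) ^ (n * m2) * ((2:ℝ) ^ (n * m2)) ^ (2 ^ σ - 1) := by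
                    rw [pow_succ]; ring
            rw [hsplit]
            rw [show (2:ℝ) ^ (n * m2) * ((2:ℝ) ^ (n * m2)) ^ (2 ^ σ - 1) / 8 * ((2:ℝ) ^ (σ + 3) * 2 ^ (n - m2))
              = ((2:ℝ) ^ (n * m2) * 2 ^ (σ + 3) * 2 ^ (n - m2) / 8) * ((2:ℝ) ^ (n * m2)) ^ (2 ^ σ - 1) by ring]
            apply mul_le_mul_of_nonneg_right _ (by positivity)
            rw [le_div_iff₀ (by norm_num : (0:ℝ) < 8)]
            calc (2:ℝ) ^ (σ + n + (n - 1) * m2) * 8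
                  = (2:ℝ) ^ (σ + n + (n - 1) * m2) * 2 ^ 3 := by norm_num
              _ = (2:ℝ) ^ (σ + n + (n - 1) * m2 + 3) := (pow_add _ _ _).symm
              _ ≤ (2:ℝ) ^ (n * m2 + (σ + 3) + (n - m2)) := by
                  apply pow_le_pow_right₀ (by norm_num)
                  omega
              _ = (2:ℝ) ^ (n * m2) * 2 ^ (σ + 3) * 2 ^ (n - m2) := by
                  rw [pow_add, pow_add]
        _ = (2:ℝ) ^ (n * m2 * 2 ^ σ) / 8 * ((KB:ℝ)) := by
            rw [hKB]; push_cast; ring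
        _ ≤ (2:ℝ) ^ (n * m2 * 2 ^ σ) / 8 * ((KB:ℝ) + 1) := by
            apply mul_le_mul_of_nonneg_left _ (by positivity)
            linarith
    -- extract a good family
    have htotal : (#(Bad1 ∪ Bad2) : ℝ) < (Fintype.card ((Fin σ → Bool) → Fin m2 → Vec n) : ℝ) := by
      have hcard : Fintype.card ((Fin σ → Bool) → Fin m2 → Vec n) = 2 ^ (n * m2 * 2 ^ σ) := by
        rw [Fintype.card_fun, hcardβ, hcardι, ← pow_mul]
      rw [hcard]
      push_cast
      calc (#(Bad1 ∪ Bad2) : ℝ) ≤ (#Bad1 : ℝ) + (#Bad2 : ℝ) := by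
            exact_mod_cast Finset.card_union_le _ _
        _ ≤ (2:ℝ) ^ (n * m2 * 2 ^ σ) / 4 + (2:ℝ) ^ (n * m2 * 2 ^ σ) / 8 := by
            exact add_le_add hb1R hb2R
        _ < (2:ℝ) ^ (n * m2 * 2 ^ σ) := by
            have : (0:ℝ) < (2:ℝ) ^ (n * m2 * 2 ^ σ) := by positivity
            linarith
    have hlt : #(Bad1 ∪ Bad2) < Fintype.card ((Fin σ → Bool) → Fin m2 → Vec n) := by exact_mod_cast htotal
    have hne : ((Bad1 ∪ Bad2)ᶜ : Finset ((Fin σ → Bool) → Fin m2 → Vec n)).Nonempty := by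
      rw [← Finset.card_pos, Finset.card_compl]
      omega
    obtain ⟨G, hG⟩ := hne
    rw [Finset.mem_compl, Finset.mem_union] at hG
    push_neg at hG
    obtain ⟨hG1, hG2⟩ := hG
    rw [hBad1, mem_filter] at hG1
    rw [hBad2, mem_filter] at hG2
    push_neg at hG1 hG2
    refine ⟨G, fun e => ?_, ?_⟩
    · have := hG1 (mem_univ G) e
      omega
    · have := hG2 (mem_univ G)
      omega

/-- the generic Chernoff-style numeric chain -/
lemma real_chain (n σ m2 b X : ℕ) (hn : 1 ≤ n) (hNσ : n + 2 ≤ 2 ^ σ)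
    (hNb : ((2:ℝ) ^ σ) * b ≤ (2:ℝ) ^ (n * m2) / 2)
    (hX : X ≤ 2 ^ n * ((2 ^ σ).choose (n + 2) *
      (b ^ (n + 2) * (2 ^ (n * m2)) ^ (2 ^ σ - (n + 2))))) :
    (X : ℝ) ≤ (2:ℝ) ^ (n * m2 * 2 ^ σ) / 4 := by
  set k := n + 2 with hk
  calc (X : ℝ)
      ≤ 2 ^ n * ((2 ^ σ : ℕ).choose k * ((b:ℝ) ^ k * ((2:ℝ) ^ (n * m2)) ^ (2 ^ σ - k))) := by
        exact_mod_cast hX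
    _ ≤ 2 ^ n * (((2:ℝ) ^ σ) ^ k * ((b:ℝ) ^ k * ((2:ℝ) ^ (n * m2)) ^ (2 ^ σ - k))) := by
        apply mul_le_mul_of_nonneg_left _ (by positivity)
        apply mul_le_mul_of_nonneg_right _ (by positivity)
        exact_mod_cast Nat.choose_le_pow (2 ^ σ) k
    _ = 2 ^ n * ((((2:ℝ) ^ σ) * b) ^ k * ((2:ℝ) ^ (n * m2)) ^ (2 ^ σ - k)) := by
        rw [mul_pow]; ring
    _ ≤ 2 ^ n * (((2:ℝ) ^ (n * m2) / 2) ^ k * ((2:ℝ) ^ (n * m2)) ^ (2 ^ σ - k)) := by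
        apply mul_le_mul_of_nonneg_left _ (by positivity)
        apply mul_le_mul_of_nonneg_right _ (by positivity)
        apply pow_le_pow_left₀ (by positivity) hNb
    _ = (2:ℝ) ^ n / 2 ^ k * (((2:ℝ) ^ (n * m2)) ^ k * ((2:ℝ) ^ (n * m2)) ^ (2 ^ σ - k)) := by
        rw [div_pow]; ring
    _ = (2:ℝ) ^ n / 2 ^ k * ((2:ℝ) ^ (n * m2)) ^ (2 ^ σ) := by
        rw [← pow_add]
        congr 2
        omega
    _ = (2:ℝ) ^ n / 2 ^ k * (2:ℝ) ^ (n * m2 * 2 ^ σ) := by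
        rw [← pow_mul]
    _ ≤ (1/4) * (2:ℝ) ^ (n * m2 * 2 ^ σ) := by
        apply mul_le_mul_of_nonneg_right _ (by positivity)
        rw [hk, div_le_iff₀ (by positivity)]
        calc (2:ℝ) ^ n = (1/4) * 2 ^ (n + 2) := by rw [pow_add]; ring
          _ ≤ _ := le_refl _
    _ = (2:ℝ) ^ (n * m2 * 2 ^ σ) / 4 := by ring

/-- Existence of a good A-side family, given a good B-side family -/
lemma exists_famA (n σ T mA2 mB2 : ℕ) (hn : 1 ≤ n) (hmA2n : mA2 ≤ n) (hmB2n : mB2 ≤ n)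
    (hNσ : n + 2 ≤ 2 ^ σ)
    (G : (Fin σ → Bool) → Fin mB2 → Vec n)
    (hG2 : ∑ j : Fin σ → Bool, kerCount (G j) ≤ 2 ^ (σ + 3) * 2 ^ (n - mB2))
    (hcase : n ≤ mA2 ∨
      (((2:ℝ) ^ (σ + 1) * ballCard n T ≤ 2 ^ mA2) ∧
       ((ballCard n T : ℝ) * 2 ^ (2 * σ + 4 + n) ≤ 2 ^ mA2 * 2 ^ mB2))) :
    ∃ F : (Fin σ → Bool) → Fin mA2 → Vec n,
      (∀ e : Vec n, #{i : Fin σ → Bool | badKer T e (F i)} ≤ n + 1) ∧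
      (∀ e : Vec n, #{i : Fin σ → Bool |
          ∃ j : Fin σ → Bool, cellBad T e (F i) (G j)} ≤ n + 1) := by
  classical
  rcases hcase with hcap | ⟨hrand1, hrand2⟩
  · refine ⟨fun _ => idMat, fun e => ?_, fun e => ?_⟩
    · have h0 : ∀ i : Fin σ → Bool, i ∈ (univ : Finset (Fin σ → Bool)) →
          ¬ badKer T e ((fun _ : Fin σ → Bool => (idMat : Fin mA2 → Vec n)) i) := by
        intro i _
        rintro ⟨v, hv0, hvm, -⟩
        exact hv0 (idMat_ker hcap v hvm)
      rw [Finset.filter_false_of_mem h0]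
      simp
    · have h0 : ∀ i : Fin σ → Bool, i ∈ (univ : Finset (Fin σ → Bool)) →
          ¬ (∃ j : Fin σ → Bool,
            cellBad T e ((fun _ : Fin σ → Bool => (idMat : Fin mA2 → Vec n)) i) (G j)) := by
        intro i _
        rintro ⟨j, u, v, hu0, hv0, hum, hvm, hb⟩
        exact hu0 (idMat_ker hcap u hum)
      rw [Finset.filter_false_of_mem h0]
      simp
  · have hcardι : Fintype.card (Fin σ → Bool) = 2 ^ σ := by
      simp [Fintype.card_fun]
    have hcardβ : Fintype.card (Fin mA2 → Vec n) = 2 ^ (n * mA2) := by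
      simp [Fintype.card_fun, Fintype.card_pi]
      rw [← pow_mul]
    set k := n + 2 with hk
    set bA := ballCard n T * 2 ^ ((n - 1) * mA2) with hbA
    set bR := (∑ j : Fin σ → Bool, kerCount (G j)) * (ballCard n T * 2 ^ ((n - 1) * mA2)) with hbR
    set Bad1 := (Finset.filter (fun F : (Fin σ → Bool) → Fin mA2 → Vec n =>
      ∃ e : Vec n, k ≤ #{i : Fin σ → Bool | badKer T e (F i)}) univ) with hBad1
    set Bad2 := (Finset.filter (fun F : (Fin σ → Bool) → Fin mA2 → Vec n =>
      ∃ e : Vec n, k ≤ #{i : Fin σ → Bool |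
        ∃ j : Fin σ → Bool, cellBad T e (F i) (G j)}) univ) with hBad2
    have hmA2split : mA2 + (n - 1) * mA2 = n * mA2 := by
      cases n with
      | zero => omega
      | succ n' => simp [Nat.succ_sub_one]; ring
    -- counting bound 1
    have h1 : #Bad1 ≤ 2 ^ n * ((2 ^ σ).choose k * (bA ^ k * (2 ^ (n * mA2)) ^ (2 ^ σ - k))) := by
      have := card_filter_threshold (ι := (Fin σ → Bool)) (β := (Fin mA2 → Vec n)) (E := Vec n)
        (fun e M => badKer T e M) k bA (fun e => card_badKer_le e)
      rw [hcardι, hcardβ] at this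
      have hVc : Fintype.card (Vec n) = 2 ^ n := by simp [Fintype.card_fun]
      rw [hVc] at this
      exact this
    have h2 : #Bad2 ≤ 2 ^ n * ((2 ^ σ).choose k * (bR ^ k * (2 ^ (n * mA2)) ^ (2 ^ σ - k))) := by
      have := card_filter_threshold (ι := (Fin σ → Bool)) (β := (Fin mA2 → Vec n)) (E := Vec n)
        (fun e M => ∃ j : Fin σ → Bool, cellBad T e M (G j)) k bR
        (fun e => card_cellRow_le T e G)
      rw [hcardι, hcardβ] at this
      have hVc : Fintype.card (Vec n) = 2 ^ n := by simp [Fintype.card_fun]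
      rw [hVc] at this
      exact this
    -- real bounds
    have hNbA : ((2:ℝ) ^ σ) * bA ≤ (2:ℝ) ^ (n * mA2) / 2 := by
      rw [hbA]
      push_cast
      calc (2:ℝ) ^ σ * ((ballCard n T : ℝ) * 2 ^ ((n - 1) * mA2))
          = ((2:ℝ) ^ (σ + 1) * (ballCard n T : ℝ)) * 2 ^ ((n - 1) * mA2) / 2 := by ring
        _ ≤ ((2:ℝ) ^ mA2) * 2 ^ ((n - 1) * mA2) / 2 := by
            apply div_le_div_of_nonneg_right _ (by norm_num)
            apply mul_le_mul_of_nonneg_right hrand1 (by positivity)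
        _ = (2:ℝ) ^ (n * mA2) / 2 := by
            rw [← pow_add, hmA2split]
    have hNbR : ((2:ℝ) ^ σ) * bR ≤ (2:ℝ) ^ (n * mA2) / 2 := by
      rw [hbR]
      push_cast
      have hsum : (∑ x : Fin σ → Bool, (kerCount (G x) : ℝ))
          ≤ (2:ℝ) ^ (σ + 3) * 2 ^ (n - mB2) := by
        exact_mod_cast hG2
      calc (2:ℝ) ^ σ * ((∑ x : Fin σ → Bool, (kerCount (G x) : ℝ)) *
              ((ballCard n T : ℝ) * 2 ^ ((n - 1) * mA2)))
          ≤ (2:ℝ) ^ σ * (((2:ℝ) ^ (σ + 3) * 2 ^ (n - mB2)) *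
              ((ballCard n T : ℝ) * 2 ^ ((n - 1) * mA2))) := by
            apply mul_le_mul_of_nonneg_left _ (by positivity)
            apply mul_le_mul_of_nonneg_right hsum (by positivity)
        _ = (ballCard n T : ℝ) * 2 ^ (2 * σ + 3 + (n - mB2)) * 2 ^ ((n - 1) * mA2) := by
            rw [show 2 * σ + 3 + (n - mB2) = σ + (σ + 3) + (n - mB2) by ring]
            rw [pow_add, pow_add]
            ring
        _ ≤ (2:ℝ) ^ (mA2 + (n - 1) * mA2) / 2 := by
            rw [show (2:ℝ) ^ (mA2 + (n - 1) * mA2) / 2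
              = ((2:ℝ) ^ mA2 / 2) * 2 ^ ((n - 1) * mA2) by rw [pow_add]; ring]
            apply mul_le_mul_of_nonneg_right _ (by positivity)
            -- ballCard * 2^(2σ+3+(n-mB2)) ≤ 2^mA2 / 2
            have hsplit : (2:ℝ) ^ (2 * σ + 4 + n) = 2 ^ (2 * σ + 4 + (n - mB2)) * 2 ^ mB2 := by
              rw [← pow_add]
              congr 1
              omega
            have h2' : (ballCard n T : ℝ) * 2 ^ (2 * σ + 4 + (n - mB2)) ≤ 2 ^ mA2 := by
              have hpos : (0:ℝ) < 2 ^ mB2 := by positivity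
              rw [← mul_le_mul_iff_left₀ hpos]
              calc (ballCard n T : ℝ) * 2 ^ (2 * σ + 4 + (n - mB2)) * 2 ^ mB2
                  = (ballCard n T : ℝ) * 2 ^ (2 * σ + 4 + n) := by
                    rw [hsplit]; ring
                _ ≤ 2 ^ mA2 * 2 ^ mB2 := hrand2
            calc (ballCard n T : ℝ) * 2 ^ (2 * σ + 3 + (n - mB2))
                = (ballCard n T : ℝ) * 2 ^ (2 * σ + 4 + (n - mB2)) / 2 := by
                  rw [show 2 * σ + 4 + (n - mB2) = (2 * σ + 3 + (n - mB2)) + 1 by ring]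
                  rw [pow_succ]; ring
              _ ≤ (2:ℝ) ^ mA2 / 2 := by
                  apply div_le_div_of_nonneg_right h2' (by norm_num)
        _ = (2:ℝ) ^ (n * mA2) / 2 := by rw [hmA2split]
    have hb1R := real_chain n σ mA2 bA (#Bad1) hn hNσ hNbA h1
    have hb2R := real_chain n σ mA2 bR (#Bad2) hn hNσ hNbR h2
    have hlt : #(Bad1 ∪ Bad2) < Fintype.card ((Fin σ → Bool) → Fin mA2 → Vec n) := by
      have hcard : Fintype.card ((Fin σ → Bool) → Fin mA2 → Vec n) = 2 ^ (n * mA2 * 2 ^ σ) := by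
        rw [Fintype.card_fun, hcardβ, hcardι, ← pow_mul]
      rw [hcard]
      have hR : (#(Bad1 ∪ Bad2) : ℝ) < (2:ℝ) ^ (n * mA2 * 2 ^ σ) := by
        calc (#(Bad1 ∪ Bad2) : ℝ) ≤ (#Bad1 : ℝ) + (#Bad2 : ℝ) := by
              exact_mod_cast Finset.card_union_le _ _
          _ ≤ (2:ℝ) ^ (n * mA2 * 2 ^ σ) / 4 + (2:ℝ) ^ (n * mA2 * 2 ^ σ) / 4 :=
              add_le_add hb1R hb2R
          _ < (2:ℝ) ^ (n * mA2 * 2 ^ σ) := by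
              have : (0:ℝ) < (2:ℝ) ^ (n * mA2 * 2 ^ σ) := by positivity
              linarith
      exact_mod_cast hR
    have hne : ((Bad1 ∪ Bad2)ᶜ : Finset ((Fin σ → Bool) → Fin mA2 → Vec n)).Nonempty := by
      rw [← Finset.card_pos, Finset.card_compl]
      omega
    obtain ⟨F, hF⟩ := hne
    rw [Finset.mem_compl, Finset.mem_union] at hF
    push_neg at hF
    obtain ⟨hF1, hF2⟩ := hF
    rw [hBad1, mem_filter] at hF1
    rw [hBad2, mem_filter] at hF2
    push_neg at hF1 hF2
    refine ⟨F, fun e => ?_, fun e => ?_⟩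
    · have := hF1 (mem_univ F) e
      omega
    · have := hF2 (mem_univ F) e
      omega

def b2z : Bool → ZMod 2 := fun b => if b then 1 else 0
def z2b : ZMod 2 → Bool := fun z => decide (z = 1)

lemma z2b_b2z (b : Bool) : z2b (b2z b) = b := by cases b <;> decide
lemma b2z_z2b (z : ZMod 2) : b2z (z2b z) = z := by revert z; decide

def b2v {n : ℕ} (x : Fin n → Bool) : Vec n := fun k => b2z (x k)
def v2b {n : ℕ} (u : Vec n) : Fin n → Bool := fun k => z2b (u k)

lemma v2b_b2v {n : ℕ} (x : Fin n → Bool) : v2b (b2v x) = x := by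
  funext k; exact z2b_b2z (x k)

lemma hammingDist_b2v {n : ℕ} (x y : Fin n → Bool) :
    hammingNorm (b2v x + b2v y) = hammingDist x y := by
  unfold hammingNorm hammingDist
  congr 1
  apply Finset.filter_congr
  intro k _
  have key : ∀ a b : Bool, (b2z a + b2z b ≠ 0) ↔ (a ≠ b) := by decide
  simp only [Pi.add_apply, b2v]
  exact key (x k) (y k)

def enc {mOut : ℕ} (σ m2 : ℕ) (h : σ + m2 ≤ mOut) (seed : Fin σ → Bool)
    (hash : Fin m2 → ZMod 2) : Fin mOut → Bool :=
  fun k => if hk : (k : ℕ) < σ then seed ⟨k, hk⟩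
    else if hk2 : (k : ℕ) - σ < m2 then z2b (hash ⟨(k : ℕ) - σ, hk2⟩) else false

def decSeed {mOut : ℕ} (σ : ℕ) (h : σ ≤ mOut) (a : Fin mOut → Bool) : Fin σ → Bool :=
  fun s => a ⟨(s : ℕ), lt_of_lt_of_le s.2 h⟩

def decHash {mOut : ℕ} (σ m2 : ℕ) (h : σ + m2 ≤ mOut) (a : Fin mOut → Bool) :
    Fin m2 → ZMod 2 :=
  fun t => b2z (a ⟨σ + (t : ℕ), lt_of_lt_of_le (Nat.add_lt_add_left t.2 σ) h⟩)

lemma decSeed_enc {mOut σ m2 : ℕ} (h : σ + m2 ≤ mOut) (h' : σ ≤ mOut)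
    (seed : Fin σ → Bool) (hash : Fin m2 → ZMod 2) :
    decSeed σ h' (enc σ m2 h seed hash) = seed := by
  funext s
  have hs : ((⟨(s : ℕ), lt_of_lt_of_le s.2 h'⟩ : Fin mOut) : ℕ) < σ := s.2
  simp only [decSeed, enc, dif_pos hs]

lemma decHash_enc {mOut σ m2 : ℕ} (h : σ + m2 ≤ mOut)
    (seed : Fin σ → Bool) (hash : Fin m2 → ZMod 2) :
    decHash σ m2 h (enc σ m2 h seed hash) = hash := by
  funext t
  have h1 : ¬ ((⟨σ + (t : ℕ), lt_of_lt_of_le (Nat.add_lt_add_left t.2 σ) h⟩ : Fin mOut) : ℕ) < σ := by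
    simp
  have h2 : ((⟨σ + (t : ℕ), lt_of_lt_of_le (Nat.add_lt_add_left t.2 σ) h⟩ : Fin mOut) : ℕ) - σ < m2 := by
    simp
  simp only [decHash, enc, dif_neg h1, dif_pos h2]
  rw [b2z_z2b]
  congr 1
  apply Fin.ext
  simp

/-- the candidate set used by the decoder -/
def candSet {n mA2 mB2 : ℕ} (T : ℕ) (MA : Fin mA2 → Vec n) (MB : Fin mB2 → Vec n)
    (ha : Fin mA2 → ZMod 2) (hb : Fin mB2 → ZMod 2) : Finset (Vec n × Vec n) :=
  Finset.filter (fun p : Vec n × Vec n =>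
    hammingNorm (p.1 + p.2) ≤ T ∧ mapp MA p.1 = ha ∧ mapp MB p.2 = hb) univ

noncomputable def decodeFun {n mA mB mA2 mB2 σ : ℕ} (T : ℕ)
    (hA : σ + mA2 ≤ mA) (hB : σ + mB2 ≤ mB)
    (famA : (Fin σ → Bool) → Fin mA2 → Vec n)
    (famB : (Fin σ → Bool) → Fin mB2 → Vec n)
    (a : Fin mA → Bool) (b : Fin mB → Bool) : (Fin n → Bool) × (Fin n → Bool) :=
  let i := decSeed σ (le_trans (Nat.le_add_right _ _) hA) a
  let j := decSeed σ (le_trans (Nat.le_add_right _ _) hB) b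
  let C := candSet T (famA i) (famB j) (decHash σ mA2 hA a) (decHash σ mB2 hB b)
  if h : ∃ p : Vec n × Vec n, C = {p} then
    (v2b h.choose.1, v2b h.choose.2)
  else (fun _ => false, fun _ => false)

lemma decode_correct {n mA mB mA2 mB2 σ : ℕ} (T : ℕ)
    (hA : σ + mA2 ≤ mA) (hB : σ + mB2 ≤ mB)
    (famA : (Fin σ → Bool) → Fin mA2 → Vec n)
    (famB : (Fin σ → Bool) → Fin mB2 → Vec n)
    (a : Fin mA → Bool) (b : Fin mB → Bool) (p0 : Vec n × Vec n)
    (hC : candSet T (famA (decSeed σ (le_trans (Nat.le_add_right _ _) hA) a))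
      (famB (decSeed σ (le_trans (Nat.le_add_right _ _) hB) b))
      (decHash σ mA2 hA a) (decHash σ mB2 hB b) = {p0}) :
    decodeFun T hA hB famA famB a b = (v2b p0.1, v2b p0.2) := by
  unfold decodeFun
  have hex : ∃ p : Vec n × Vec n, candSet T (famA (decSeed σ (le_trans (Nat.le_add_right _ _) hA) a))
      (famB (decSeed σ (le_trans (Nat.le_add_right _ _) hB) b))
      (decHash σ mA2 hA a) (decHash σ mB2 hB b) = {p} := ⟨p0, hC⟩
  rw [dif_pos hex]
  have hspec := hex.choose_spec
  have heq : p0 = hex.choose := Finset.singleton_injective (hC.symm.trans hspec)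
  subst heq
  rfl


lemma candSet_singleton {n mA2 mB2 T : ℕ} (MA : Fin mA2 → Vec n) (MB : Fin mB2 → Vec n)
    (x y : Fin n → Bool) (hxy : hammingNorm (b2v x + b2v y) ≤ T)
    (hbadA : ¬ badKer T (b2v x + b2v y) MA)
    (hbadB : ¬ badKer T (b2v x + b2v y) MB)
    (hcell : ¬ cellBad T (b2v x + b2v y) MA MB) :
    candSet T MA MB (mapp MA (b2v x)) (mapp MB (b2v y)) = {(b2v x, b2v y)} := by
  ext p
  simp only [candSet, mem_filter, mem_univ, true_and, Finset.mem_singleton]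
  constructor
  · rintro ⟨h1, h2, h3⟩
    have hmu : mapp MA (b2v x + p.1) = 0 := mapp_cancel MA (b2v x) p.1 h2.symm
    have hmv : mapp MB (b2v y + p.2) = 0 := mapp_cancel MB (b2v y) p.2 h3.symm
    have hid : (b2v x + b2v y) + (b2v x + p.1) + (b2v y + p.2) = p.1 + p.2 := by
      have key : ∀ a b c d : ZMod 2, (a + b) + (a + c) + (b + d) = c + d := by decide
      funext k
      exact key (b2v x k) (b2v y k) (p.1 k) (p.2 k)
    by_cases hu0 : b2v x + p.1 = 0
    · by_cases hv0 : b2v y + p.2 = 0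
      · have hp1 : p.1 = b2v x := by
          have key : ∀ a c : ZMod 2, a + c = 0 → c = a := by decide
          funext k
          exact key _ _ (congrFun hu0 k)
        have hp2 : p.2 = b2v y := by
          have key : ∀ a c : ZMod 2, a + c = 0 → c = a := by decide
          funext k
          exact key _ _ (congrFun hv0 k)
        exact Prod.ext hp1 hp2
      · exfalso
        apply hbadB
        refine ⟨b2v y + p.2, hv0, hmv, ?_⟩
        have : (b2v x + b2v y) + (b2v y + p.2) = p.1 + p.2 := by
          rw [← hid, hu0]
          abel
        rw [this]
        exact h1
    · exfalso
      by_cases hv0 : b2v y + p.2 = 0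
      · apply hbadA
        refine ⟨b2v x + p.1, hu0, hmu, ?_⟩
        have : (b2v x + b2v y) + (b2v x + p.1) = p.1 + p.2 := by
          rw [← hid, hv0]
          abel
        rw [this]
        exact h1
      · apply hcell
        refine ⟨b2v x + p.1, b2v y + p.2, hu0, hv0, hmu, hmv, ?_⟩
        rw [hid]
        exact h1
  · intro h
    subst h
    exact ⟨hxy, rfl, rfl⟩

lemma card_filter_fst {γ : Type*} [Fintype γ] [DecidableEq γ] (Q : γ → Prop) [DecidablePred Q] :
    #(Finset.filter (fun p : γ × γ => Q p.1) univ) = #(Finset.filter Q univ) * Fintype.card γ := by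
  rw [show Finset.filter (fun p : γ × γ => Q p.1) univ = (Finset.filter Q univ) ×ˢ univ by
    ext p; simp [Finset.mem_product]]
  rw [Finset.card_product, Finset.card_univ]

lemma card_filter_snd {γ : Type*} [Fintype γ] [DecidableEq γ] (Q : γ → Prop) [DecidablePred Q] :
    #(Finset.filter (fun p : γ × γ => Q p.2) univ) = Fintype.card γ * #(Finset.filter Q univ) := by
  rw [show Finset.filter (fun p : γ × γ => Q p.2) univ = univ ×ˢ (Finset.filter Q univ) by
    ext p; simp [Finset.mem_product]]
  rw [Finset.card_product, Finset.card_univ]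

lemma card_filter_triple {γ : Type*} [Fintype γ] (Q : γ → γ → Prop) [∀ a, DecidablePred (Q a)] :
    #(Finset.filter (fun r : γ × γ × γ => Q r.1 r.2.1) univ)
      = #(Finset.filter (fun p : γ × γ => Q p.1 p.2) univ) * Fintype.card γ := by
  rw [Finset.card_filter, Finset.card_filter, Fintype.sum_prod_type, Fintype.sum_prod_type,
    Finset.sum_mul]
  apply Finset.sum_congr rfl
  intro a _
  rw [Fintype.sum_prod_type, Finset.sum_mul]
  apply Finset.sum_congr rfl
  intro b _
  rcases Classical.em (Q a b) with h | h <;>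
    simp [h, Finset.card_univ, mul_comm]

end SWAux


namespace SWAux

set_option maxHeartbeats 2000000 in
lemma main_ach (α : ℝ) (hα0 : 0 < α) (hα2 : α < 1 / 2) (n : ℕ) (hn : 1 ≤ n) (mA mB : ℕ)
    (hsum : (mA : ℝ) + mB ≥ (1 + binEnt α) * n
      + ((4 * (Nat.sqrt n + 1 + Nat.clog 2 (n + 2) + 3) + 6 : ℕ) : ℝ))
    (hmA : (mA : ℝ) ≥ binEnt α * n
      + ((4 * (Nat.sqrt n + 1 + Nat.clog 2 (n + 2) + 3) + 6 : ℕ) : ℝ))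
    (hmB : (mB : ℝ) ≥ binEnt α * n
      + ((4 * (Nat.sqrt n + 1 + Nat.clog 2 (n + 2) + 3) + 6 : ℕ) : ℝ)) :
    RandAchievable n ⌊α * n⌋₊ mA mB ((2 : ℝ) ^ (-((n : ℝ) ^ ((1:ℝ) / 2)))) := by
  classical
  set T := ⌊α * n⌋₊ with hT
  set t := Nat.sqrt n + 1 with ht
  set L := Nat.clog 2 (n + 2) with hL
  set σ := t + L + 3 with hσdef
  have hent : 0 ≤ binEnt α := by
    have h1 : Real.logb 2 α ≤ 0 :=
      Real.logb_nonpos (by norm_num) (le_of_lt hα0) (by linarith)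
    have h2 : Real.logb 2 (1 - α) ≤ 0 :=
      Real.logb_nonpos (by norm_num) (by linarith) (by linarith)
    rw [binEnt]
    nlinarith
  have hδval : ((4 * σ + 6 : ℕ) : ℝ) = 4 * (σ : ℝ) + 6 := by push_cast; ring
  have hn1R : (1:ℝ) ≤ (n:ℝ) := by exact_mod_cast hn
  have hTle : (T : ℝ) ≤ α * n := Nat.floor_le (by positivity)
  have hTn : T ≤ n := by
    have h1 : (T : ℝ) ≤ (n : ℝ) := le_trans hTle (by nlinarith)
    exact_mod_cast h1
  have hV : (ballCard n T : ℝ) ≤ 2 ^ (binEnt α * n) := ballCard_le_rpow hα0 hα2 hTle hTn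
  have hNL : n + 2 ≤ 2 ^ L := Nat.le_pow_clog (by norm_num) _
  have hNσ : n + 2 ≤ 2 ^ σ :=
    le_trans hNL (Nat.pow_le_pow_right (by norm_num) (by omega))
  -- σ fits into the messages
  have hσmA : σ ≤ mA := by
    have h1 : ((4 * σ + 6 : ℕ) : ℝ) ≤ (mA : ℝ) := by nlinarith [mul_nonneg hent (le_of_lt (lt_of_lt_of_le one_pos hn1R))]
    have h2 : (4 * σ + 6 : ℕ) ≤ mA := by exact_mod_cast h1
    omega
  have hσmB : σ ≤ mB := by
    have h1 : ((4 * σ + 6 : ℕ) : ℝ) ≤ (mB : ℝ) := by nlinarith [mul_nonneg hent (le_of_lt (lt_of_lt_of_le one_pos hn1R))]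
    have h2 : (4 * σ + 6 : ℕ) ≤ mB := by exact_mod_cast h1
    omega
  set mA2 := min (mA - σ) n with hmA2def
  set mB2 := min (mB - σ) n with hmB2def
  have hA2n : mA2 ≤ n := min_le_right _ _
  have hB2n : mB2 ≤ n := min_le_right _ _
  have hσA : σ + mA2 ≤ mA := by
    have := min_le_left (mA - σ) n
    omega
  have hσB : σ + mB2 ≤ mB := by
    have := min_le_left (mB - σ) n
    omega
  have hmAR : (mA : ℝ) ≥ binEnt α * n + (4 * (σ:ℝ) + 6) := by rw [← hδval]; exact hmA
  have hmBR : (mB : ℝ) ≥ binEnt α * n + (4 * (σ:ℝ) + 6) := by rw [← hδval]; exact hmB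
  have hsumR : (mA : ℝ) + mB ≥ (1 + binEnt α) * n + (4 * (σ:ℝ) + 6) := by
    rw [← hδval]; exact hsum
  -- the B-side hypothesis
  have hcaseB : n ≤ mB2 ∨ ((2:ℝ) ^ (σ + 1) * ballCard n T ≤ 2 ^ mB2) := by
    by_cases hc : n ≤ mB - σ
    · left
      rw [hmB2def]
      omega
    · right
      have hmB2eq : mB2 = mB - σ := by rw [hmB2def]; omega
      have hcast : (mB2 : ℝ) = (mB : ℝ) - σ := by
        rw [hmB2eq, Nat.cast_sub hσmB]
      have hexp : ((σ:ℝ) + 1) + binEnt α * n ≤ (mB2 : ℝ) := by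
        rw [hcast]; linarith
      calc (2:ℝ) ^ (σ + 1) * ballCard n T
          ≤ (2:ℝ) ^ (σ + 1) * 2 ^ (binEnt α * n) := by
            apply mul_le_mul_of_nonneg_left hV (by positivity)
        _ = (2:ℝ) ^ (((σ + 1 : ℕ)) : ℝ) * 2 ^ (binEnt α * n) := by
            rw [Real.rpow_natCast]
        _ = (2:ℝ) ^ ((((σ + 1 : ℕ)) : ℝ) + binEnt α * n) :=
            (Real.rpow_add (by norm_num) _ _).symm
        _ ≤ (2:ℝ) ^ ((mB2 : ℕ) : ℝ) := by
            apply Real.rpow_le_rpow_of_exponent_le (by norm_num)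
            push_cast
            push_cast at hexp
            linarith
        _ = (2:ℝ) ^ mB2 := Real.rpow_natCast _ _
  -- the A-side hypothesis
  have hcaseA : n ≤ mA2 ∨
      (((2:ℝ) ^ (σ + 1) * ballCard n T ≤ 2 ^ mA2) ∧
       ((ballCard n T : ℝ) * 2 ^ (2 * σ + 4 + n) ≤ 2 ^ mA2 * 2 ^ mB2)) := by
    by_cases hc : n ≤ mA - σ
    · left
      rw [hmA2def]
      omega
    · right
      have hmA2eq : mA2 = mA - σ := by rw [hmA2def]; omega
      have hcastA : (mA2 : ℝ) = (mA : ℝ) - σ := by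
        rw [hmA2eq, Nat.cast_sub hσmA]
      constructor
      · have hexp : ((σ:ℝ) + 1) + binEnt α * n ≤ (mA2 : ℝ) := by
          rw [hcastA]; linarith
        calc (2:ℝ) ^ (σ + 1) * ballCard n T
            ≤ (2:ℝ) ^ (σ + 1) * 2 ^ (binEnt α * n) := by
              apply mul_le_mul_of_nonneg_left hV (by positivity)
          _ = (2:ℝ) ^ (((σ + 1 : ℕ)) : ℝ) * 2 ^ (binEnt α * n) := by
              rw [Real.rpow_natCast]
          _ = (2:ℝ) ^ ((((σ + 1 : ℕ)) : ℝ) + binEnt α * n) :=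
              (Real.rpow_add (by norm_num) _ _).symm
          _ ≤ (2:ℝ) ^ ((mA2 : ℕ) : ℝ) := by
              apply Real.rpow_le_rpow_of_exponent_le (by norm_num)
              push_cast
              push_cast at hexp
              linarith
          _ = (2:ℝ) ^ mA2 := Real.rpow_natCast _ _
      · have hexp2 : binEnt α * n + (((2 * σ + 4 + n : ℕ)) : ℝ) ≤ (mA2 : ℝ) + (mB2 : ℝ) := by
          have hc2 : ((2 * σ + 4 + n : ℕ) : ℝ) = 2 * (σ:ℝ) + 4 + n := by push_cast; ring
          rw [hc2]
          by_cases hcB : n ≤ mB - σ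
          · have hB2 : (mB2 : ℝ) = n := by
              have : mB2 = n := by rw [hmB2def]; omega
              rw [this]
            rw [hcastA, hB2]
            linarith
          · have hB2cast : (mB2 : ℝ) = (mB : ℝ) - σ := by
              have : mB2 = mB - σ := by rw [hmB2def]; omega
              rw [this, Nat.cast_sub hσmB]
            rw [hcastA, hB2cast]
            linarith
        calc (ballCard n T : ℝ) * 2 ^ (2 * σ + 4 + n)
            ≤ 2 ^ (binEnt α * n) * 2 ^ (2 * σ + 4 + n) := by
              apply mul_le_mul_of_nonneg_right hV (by positivity)
          _ = 2 ^ (binEnt α * n) * 2 ^ (((2 * σ + 4 + n : ℕ)) : ℝ) := by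
              rw [Real.rpow_natCast]
          _ = 2 ^ (binEnt α * n + ((2 * σ + 4 + n : ℕ) : ℝ)) :=
              (Real.rpow_add (by norm_num) _ _).symm
          _ ≤ (2:ℝ) ^ (((mA2 + mB2 : ℕ)) : ℝ) := by
              apply Real.rpow_le_rpow_of_exponent_le (by norm_num)
              push_cast
              push_cast at hexp2
              linarith
          _ = (2:ℝ) ^ (mA2 + mB2) := Real.rpow_natCast _ _
          _ = (2:ℝ) ^ mA2 * 2 ^ mB2 := pow_add _ _ _
  -- get the families
  obtain ⟨famB, hB1, hB2⟩ := exists_famB n σ T mB2 hn hB2n hNσ hcaseB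
  obtain ⟨famA, hA1, hA2⟩ := exists_famA n σ T mA2 mB2 hn hA2n hB2n hNσ famB hB2 hcaseA
  refine ⟨σ, (fun x r => enc σ mA2 hσA r (mapp (famA r) (b2v x))),
    (fun y r => enc σ mB2 hσB r (mapp (famB r) (b2v y))),
    (fun a b _ => decodeFun T hσA hσB famA famB a b), ?_⟩
  intro x y hxy
  set e := b2v x + b2v y with he
  have hnorm : hammingNorm e ≤ T := by rw [he, hammingDist_b2v]; exact hxy
  have hgood : ∀ i j : Fin σ → Bool,
      ¬ (badKer T e (famA i) ∨ badKer T e (famB j) ∨ cellBad T e (famA i) (famB j)) →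
      decodeFun T hσA hσB famA famB (enc σ mA2 hσA i (mapp (famA i) (b2v x)))
        (enc σ mB2 hσB j (mapp (famB j) (b2v y))) = (x, y) := by
    intro i j hng
    push_neg at hng
    obtain ⟨hg1, hg2, hg3⟩ := hng
    rw [he] at hg1 hg2 hg3
    have hstep := decode_correct T hσA hσB famA famB
      (enc σ mA2 hσA i (mapp (famA i) (b2v x)))
      (enc σ mB2 hσB j (mapp (famB j) (b2v y))) (b2v x, b2v y) ?_
    · rw [hstep]
      rw [v2b_b2v, v2b_b2v]
    · rw [decSeed_enc hσA, decSeed_enc hσB, decHash_enc, decHash_enc]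
      rw [he] at hnorm
      exact candSet_singleton (famA i) (famB j) x y hnorm hg1 hg2 hg3
  -- counting
  have hN : Fintype.card (Fin σ → Bool) = 2 ^ σ := by simp [Fintype.card_fun]
  set badP : (Fin σ → Bool) × (Fin σ → Bool) → Prop := fun pr =>
    badKer T e (famA pr.1) ∨ badKer T e (famB pr.2) ∨ cellBad T e (famA pr.1) (famB pr.2)
    with hbadP
  have hSbadle : #(Finset.filter badP univ) ≤ 3 * ((n + 1) * 2 ^ σ) := by
    simp only [hbadP]
    rw [Finset.filter_or]
    calc #(_ ∪ _) ≤ _ := Finset.card_union_le _ _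
      _ ≤ (n + 1) * 2 ^ σ + ((n + 1) * 2 ^ σ + (n + 1) * 2 ^ σ) := by
          apply add_le_add
          · rw [card_filter_fst (fun i => badKer T e (famA i)), hN]
            exact Nat.mul_le_mul_right _ (hA1 e)
          · rw [Finset.filter_or]
            calc #(_ ∪ _) ≤ _ := Finset.card_union_le _ _
              _ ≤ (n + 1) * 2 ^ σ + (n + 1) * 2 ^ σ := by
                  apply add_le_add
                  · rw [card_filter_snd (fun j => badKer T e (famB j)), hN, Nat.mul_comm]
                    exact Nat.mul_le_mul_right _ (hB1 e)
                  · calc #(Finset.filter (fun pr : (Fin σ → Bool) × (Fin σ → Bool) =>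
                          cellBad T e (famA pr.1) (famB pr.2)) univ)
                        ≤ #(Finset.filter (fun pr : (Fin σ → Bool) × (Fin σ → Bool) =>
                          ∃ j, cellBad T e (famA pr.1) (famB j)) univ) := by
                          apply Finset.card_le_card
                          apply Finset.monotone_filter_right
                          intro pr _ hpr
                          exact ⟨pr.2, hpr⟩
                      _ = #(Finset.filter (fun i : Fin σ → Bool =>
                            ∃ j, cellBad T e (famA i) (famB j)) univ) * 2 ^ σ := by
                          rw [card_filter_fst (fun i : Fin σ → Bool =>
                            ∃ j, cellBad T e (famA i) (famB j)), hN]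
                      _ ≤ (n + 1) * 2 ^ σ :=
                          Nat.mul_le_mul_right _ (hA2 e)
      _ = 3 * ((n + 1) * 2 ^ σ) := by ring
  have hgoodcard : #(Finset.filter (fun pr => ¬ badP pr) univ)
      = 2 ^ σ * 2 ^ σ - #(Finset.filter badP univ) := by
    rw [Finset.filter_not, Finset.card_sdiff_of_subset (Finset.filter_subset _ _), Finset.card_univ,
      Fintype.card_prod, hN]
  -- the success set contains the triples with a good first two components
  have hsub : Finset.filter (fun r : (Fin σ → Bool) × (Fin σ → Bool) × (Fin σ → Bool) =>
        ¬ badP (r.1, r.2.1)) univ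
      ⊆ Finset.filter (fun r : (Fin σ → Bool) × (Fin σ → Bool) × (Fin σ → Bool) =>
          (fun a b _ => decodeFun T hσA hσB famA famB a b)
            ((fun x r => enc σ mA2 hσA r (mapp (famA r) (b2v x))) x r.1)
            ((fun y r => enc σ mB2 hσB r (mapp (famB r) (b2v y))) y r.2.1) r.2.2 = (x, y)) univ := by
    apply Finset.monotone_filter_right
    intro r _ hr
    exact hgood r.1 r.2.1 hr
  have htriple : #(Finset.filter (fun r : (Fin σ → Bool) × (Fin σ → Bool) × (Fin σ → Bool) =>
        ¬ badP (r.1, r.2.1)) univ)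
      = #(Finset.filter (fun pr => ¬ badP pr) univ) * 2 ^ σ := by
    rw [card_filter_triple (fun a b => ¬ badP (a, b)), hN]
  -- final numeric comparison
  have hcard_lower : (2 ^ σ * 2 ^ σ - 3 * ((n + 1) * 2 ^ σ)) * 2 ^ σ
      ≤ #(Finset.filter (fun r : (Fin σ → Bool) × (Fin σ → Bool) × (Fin σ → Bool) =>
          (fun a b _ => decodeFun T hσA hσB famA famB a b)
            ((fun x r => enc σ mA2 hσA r (mapp (famA r) (b2v x))) x r.1)
            ((fun y r => enc σ mB2 hσB r (mapp (famB r) (b2v y))) y r.2.1) r.2.2 = (x, y)) univ) := by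
    calc (2 ^ σ * 2 ^ σ - 3 * ((n + 1) * 2 ^ σ)) * 2 ^ σ
        ≤ (2 ^ σ * 2 ^ σ - #(Finset.filter badP univ)) * 2 ^ σ := by
          apply Nat.mul_le_mul_right
          exact Nat.sub_le_sub_left hSbadle _
      _ = #(Finset.filter (fun pr => ¬ badP pr) univ) * 2 ^ σ := by rw [hgoodcard]
      _ = _ := htriple.symm
      _ ≤ _ := Finset.card_le_card hsub
  -- conclude
  set ε : ℝ := (2:ℝ) ^ (-((n : ℝ) ^ ((1:ℝ) / 2))) with hε
  have hεpos : 0 < ε := Real.rpow_pos_of_pos (by norm_num) _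
  have htR : ((n:ℝ) ^ ((1:ℝ)/2)) ≤ (t:ℝ) := by
    rw [← Real.sqrt_eq_rpow]
    have htpos : (0:ℝ) < (t:ℝ) := by
      rw [ht]; push_cast; positivity
    have h1 : Real.sqrt n < (t:ℝ) := by
      rw [Real.sqrt_lt' htpos]
      have h2 : n < (Nat.sqrt n + 1) ^ 2 := Nat.lt_succ_sqrt' n
      rw [ht]
      push_cast
      exact_mod_cast h2
    linarith
  have hεN : (3:ℝ) * ((n:ℝ) + 1) < ε * (2:ℝ) ^ σ := by
    have h1 : ε * (2:ℝ) ^ σ = (2:ℝ) ^ ((σ:ℝ) - (n:ℝ) ^ ((1:ℝ)/2)) := by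
      rw [hε, ← Real.rpow_natCast 2 σ, ← Real.rpow_add (by norm_num)]
      congr 1
      ring
    have hσR : (σ:ℝ) = (t:ℝ) + L + 3 := by rw [hσdef]; push_cast; ring
    have h2 : ((L:ℝ) + 3) ≤ (σ:ℝ) - (n:ℝ) ^ ((1:ℝ)/2) := by
      rw [hσR]; linarith [htR]
    have h3 : (2:ℝ) ^ ((L:ℝ) + 3) ≤ (2:ℝ) ^ ((σ:ℝ) - (n:ℝ) ^ ((1:ℝ)/2)) :=
      Real.rpow_le_rpow_of_exponent_le (by norm_num) h2
    have h4 : (2:ℝ) ^ ((L:ℝ) + 3) = ((2 ^ (L + 3) : ℕ) : ℝ) := by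
      rw [show ((L:ℝ) + 3) = ((L + 3 : ℕ) : ℝ) by push_cast; ring, Real.rpow_natCast]
      push_cast
      ring
    have h5 : (3:ℝ) * ((n:ℝ) + 1) < ((2 ^ (L + 3) : ℕ) : ℝ) := by
      have h6 : 3 * (n + 1) < 2 ^ (L + 3) := by
        have h7 : (2:ℕ) ^ (L + 3) = 8 * 2 ^ L := by ring
        omega
      exact_mod_cast h6
    calc (3:ℝ) * ((n:ℝ) + 1) < ((2 ^ (L + 3) : ℕ) : ℝ) := h5
      _ = (2:ℝ) ^ ((L:ℝ) + 3) := h4.symm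
      _ ≤ (2:ℝ) ^ ((σ:ℝ) - (n:ℝ) ^ ((1:ℝ)/2)) := h3
      _ = ε * (2:ℝ) ^ σ := h1.symm
  have h3le : 3 * ((n + 1) * 2 ^ σ) ≤ 2 ^ σ * 2 ^ σ := by
    have h2σ : 8 * (n + 2) ≤ 2 ^ σ := by
      have hLσ : (2:ℕ) ^ (L + 3) ≤ 2 ^ σ :=
        Nat.pow_le_pow_right (by norm_num) (by omega)
      have h7 : (2:ℕ) ^ (L + 3) = 8 * 2 ^ L := by ring
      omega
    calc 3 * ((n + 1) * 2 ^ σ) = (3 * (n + 1)) * 2 ^ σ := by ring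
      _ ≤ 2 ^ σ * 2 ^ σ := by
        apply Nat.mul_le_mul_right
        omega
  have hfinal : (1 - ε) * 2 ^ (3 * σ) <
      (((2 ^ σ * 2 ^ σ - 3 * ((n + 1) * 2 ^ σ)) * 2 ^ σ : ℕ) : ℝ) := by
    have hcast : (((2 ^ σ * 2 ^ σ - 3 * ((n + 1) * 2 ^ σ)) * 2 ^ σ : ℕ) : ℝ)
        = ((2:ℝ) ^ σ * 2 ^ σ - 3 * (((n:ℝ) + 1) * 2 ^ σ)) * 2 ^ σ := by
      rw [Nat.cast_mul, Nat.cast_sub h3le]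
      push_cast
      ring
    rw [hcast]
    have hpow3 : (2:ℝ) ^ (3 * σ) = ((2:ℝ) ^ σ) ^ 3 := by
      rw [show 3 * σ = σ * 3 by ring, pow_mul]
    rw [hpow3]
    have hNrpos : (0:ℝ) < (2:ℝ) ^ σ := by positivity
    nlinarith [mul_lt_mul_of_pos_right hεN (mul_pos hNrpos hNrpos), hεpos, hNrpos]
  have hle : (((2 ^ σ * 2 ^ σ - 3 * ((n + 1) * 2 ^ σ)) * 2 ^ σ : ℕ) : ℝ)
      ≤ (#(Finset.filter (fun r : (Fin σ → Bool) × (Fin σ → Bool) × (Fin σ → Bool) =>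
          (fun a b _ => decodeFun T hσA hσB famA famB a b)
            ((fun x r => enc σ mA2 hσA r (mapp (famA r) (b2v x))) x r.1)
            ((fun y r => enc σ mB2 hσB r (mapp (famB r) (b2v y))) y r.2.1) r.2.2 = (x, y)) univ) : ℝ) := by
    exact_mod_cast hcard_lower
  exact lt_of_lt_of_le hfinal hle

lemma clog_le_sqrt (n : ℕ) : Nat.clog 2 (n + 2) ≤ Nat.sqrt n + 5 := by
  have sq2 : ∀ s : ℕ, s * s + 2 * s + 2 ≤ 2 ^ (s + 5) := by
    intro s
    induction s with
    | zero => norm_num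
    | succ s ih =>
      rcases Nat.eq_zero_or_pos s with rfl | hs
      · norm_num
      · have hss : 1 ≤ s * s := Nat.one_le_iff_ne_zero.2 (by positivity)
        have h2 : (2:ℕ) ^ (s + 1 + 5) = 2 * 2 ^ (s + 5) := by ring
        calc (s + 1) * (s + 1) + 2 * (s + 1) + 2 = s * s + 4 * s + 5 := by ring
          _ ≤ 2 * (s * s + 2 * s + 2) := by omega
          _ ≤ 2 * 2 ^ (s + 5) := by omega
          _ = 2 ^ (s + 1 + 5) := h2.symm
  apply (Nat.clog_le_iff_le_pow (by norm_num)).2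
  have h1 : n < (Nat.sqrt n + 1) * (Nat.sqrt n + 1) := Nat.lt_succ_sqrt n
  have h2 := sq2 (Nat.sqrt n)
  calc n + 2 ≤ Nat.sqrt n * Nat.sqrt n + 2 * Nat.sqrt n + 2 := by nlinarith
    _ ≤ 2 ^ (Nat.sqrt n + 5) := h2

lemma delta_tendsto :
    Filter.Tendsto (fun n : ℕ =>
      ((4 * (Nat.sqrt n + 1 + Nat.clog 2 (n + 2) + 3) + 6 : ℕ) : ℝ) / n)
      Filter.atTop (nhds 0) := by
  have hsq : Filter.Tendsto (fun n : ℕ => Real.sqrt n) Filter.atTop Filter.atTop := by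
    have h1 := (tendsto_rpow_atTop (by norm_num : (0:ℝ) < 1/2)).comp
      (tendsto_natCast_atTop_atTop (R := ℝ))
    apply h1.congr
    intro n
    simp only [Function.comp]
    rw [← Real.sqrt_eq_rpow]
  have htail : Filter.Tendsto (fun n : ℕ => 50 / Real.sqrt n) Filter.atTop (nhds 0) :=
    Filter.Tendsto.div_atTop tendsto_const_nhds hsq
  apply tendsto_of_tendsto_of_tendsto_of_le_of_le' tendsto_const_nhds htail
  · filter_upwards with n
    positivity
  · filter_upwards [Filter.eventually_ge_atTop 1] with n hn
    have hn1R : (1:ℝ) ≤ (n:ℝ) := by exact_mod_cast hn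
    have hsq1 : (1:ℝ) ≤ Real.sqrt n := by
      rw [show (1:ℝ) = Real.sqrt 1 by simp]
      exact Real.sqrt_le_sqrt hn1R
    have hNsq : ((Nat.sqrt n : ℕ) : ℝ) ≤ Real.sqrt n := by
      have h1 : ((Nat.sqrt n : ℕ) : ℝ) ^ 2 ≤ (n:ℝ) := by exact_mod_cast Nat.sqrt_le' n
      have h2 : ((Nat.sqrt n : ℕ) : ℝ) = Real.sqrt (((Nat.sqrt n : ℕ) : ℝ) ^ 2) := by
        rw [Real.sqrt_sq (by positivity)]
      rw [h2]
      exact Real.sqrt_le_sqrt h1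
    have hδ : ((4 * (Nat.sqrt n + 1 + Nat.clog 2 (n + 2) + 3) + 6 : ℕ) : ℝ)
        ≤ 8 * Real.sqrt n + 42 := by
      have h1 : (4 * (Nat.sqrt n + 1 + Nat.clog 2 (n + 2) + 3) + 6 : ℕ)
          ≤ 8 * Nat.sqrt n + 42 := by
        have := clog_le_sqrt n
        omega
      calc ((4 * (Nat.sqrt n + 1 + Nat.clog 2 (n + 2) + 3) + 6 : ℕ) : ℝ)
          ≤ ((8 * Nat.sqrt n + 42 : ℕ) : ℝ) := by exact_mod_cast h1
        _ = 8 * ((Nat.sqrt n : ℕ) : ℝ) + 42 := by push_cast; ring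
        _ ≤ 8 * Real.sqrt n + 42 := by linarith
    have hnpos : (0:ℝ) < (n:ℝ) := by linarith
    rw [div_le_div_iff₀ hnpos (by positivity : (0:ℝ) < Real.sqrt n)]
    have hsqn : Real.sqrt n * Real.sqrt n = (n:ℝ) :=
      Real.mul_self_sqrt (by positivity)
    calc ((4 * (Nat.sqrt n + 1 + Nat.clog 2 (n + 2) + 3) + 6 : ℕ) : ℝ) * Real.sqrt n
        ≤ (8 * Real.sqrt n + 42) * Real.sqrt n := by
          apply mul_le_mul_of_nonneg_right hδ (by positivity)
      _ = 8 * (n:ℝ) + 42 * Real.sqrt n := by rw [add_mul, mul_assoc, hsqn]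
      _ ≤ 50 * (n:ℝ) := by nlinarith [hsq1, hn1R, hsqn]

end SWAux


theorem stmt9 :
    ∃ d : ℝ, 0 < d ∧ ∃ δ : ℕ → ℝ,
      Filter.Tendsto (fun n : ℕ => δ n / n) Filter.atTop (nhds 0) ∧
      ∀ α : ℝ, 0 < α → α < 1 / 2 → ∀ n : ℕ, 1 ≤ n → ∀ mA mB : ℕ,
        (mA : ℝ) + mB ≥ (1 + binEnt α) * n + δ n →
        (mA : ℝ) ≥ binEnt α * n + δ n →
        (mB : ℝ) ≥ binEnt α * n + δ n →
        RandAchievable n ⌊α * n⌋₊ mA mB ((2 : ℝ) ^ (-((n : ℝ) ^ d))) := by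
  refine ⟨1 / 2, by norm_num,
    fun n => ((4 * (Nat.sqrt n + 1 + Nat.clog 2 (n + 2) + 3) + 6 : ℕ) : ℝ),
    SWAux.delta_tendsto, ?_⟩
  intro α hα0 hα2 n hn mA mB h1 h2 h3
  exact SWAux.main_ach α hα0 hα2 n hn mA mB h1 h2 h3
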